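/- Let f : ℝ → ℝ be continuously differentiable with compact support. Then for every x ∈ ℝ, the derivative of the logarithmic potential L(x) = ∫_ℝ ln|x − y| · f(y) dy satisfies L'(x) = ∫_ℝ ln|x − y| · f'(y) dy; i.e. the derivative may be transferred from the convolution onto f under the logarithmic kernel. -/

import Mathlib

open MeasureTheory

open Set

lemma integrableOn_log_Ioc01 : IntegrableOn Real.log (Set.Ioc (0:ℝ) 1) := by
  have h : IntegrableOn (fun x : ℝ => -Real.log x) (Set.Ioc (0:ℝ) 1) := by
    apply intervalIntegral.integrableOn_deriv_of_nonneg
      (g := fun x : ℝ => x - x * Real.log x)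
    · exact (continuous_id.sub Real.continuous_mul_log).continuousOn
    · intro x hx
      have h1 : HasDerivAt (fun y : ℝ => y * Real.log y) (1 * Real.log x + x * x⁻¹) x :=
        (hasDerivAt_id x).mul (Real.hasDerivAt_log hx.1.ne')
    -- derivative of x - x log x is 1 - (log x + 1) = - log x
      have h2 : HasDerivAt (fun y : ℝ => y - y * Real.log y) (1 - (1 * Real.log x + x * x⁻¹)) x :=
        (hasDerivAt_id x).sub h1
      convert h2 using 1
      rw [mul_inv_cancel₀ hx.1.ne']
      ring
    · intro x hx
      simp only [neg_nonneg]
      exact Real.log_nonpos hx.1.le hx.2.le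
  have := h.neg
  simp only [Pi.neg_def, neg_neg] at this
  exact this

lemma intervalIntegrable_log_abs (a b : ℝ) :
    IntervalIntegrable (fun t : ℝ => Real.log |t|) volume a b := by
  -- first: integrable on Ioc 0 R for any R
  have key : ∀ R : ℝ, IntegrableOn (fun t : ℝ => Real.log |t|) (Set.Ioc 0 R) := by
    intro R
    have hcongr : Set.EqOn (fun t : ℝ => Real.log |t|) Real.log (Set.Ioc 0 R) := by
      intro t ht
      simp [abs_of_pos ht.1]
    apply IntegrableOn.congr_fun _ hcongr.symm measurableSet_Ioc
    rcases le_total R 1 with hR | hR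
    · exact integrableOn_log_Ioc01.mono_set (Set.Ioc_subset_Ioc_right hR)
    · have h2 : IntegrableOn Real.log (Set.Ioc 1 R) := by
        apply (ContinuousOn.integrableOn_Icc ?_).mono_set Set.Ioc_subset_Icc_self
        exact Real.continuousOn_log.mono (fun x hx => by
          simp only [Set.mem_compl_iff, Set.mem_singleton_iff]
          exact ne_of_gt (lt_of_lt_of_le zero_lt_one hx.1))
      have := integrableOn_log_Ioc01.union h2
      exact this.mono_set (by
        intro x hx
        rcases le_or_gt x 1 with h | h
        · exact Or.inl ⟨hx.1, h⟩
        · exact Or.inr ⟨h, hx.2⟩)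
  set R : ℝ := max |a| |b| with hRdef
  have hR0 : (0:ℝ) ≤ R := le_trans (abs_nonneg a) (le_max_left _ _)
  have h0R : IntervalIntegrable (fun t : ℝ => Real.log |t|) volume 0 R := by
    rw [intervalIntegrable_iff_integrableOn_Ioc_of_le hR0]
    exact key R
  have hneg : IntervalIntegrable (fun t : ℝ => Real.log |t|) volume (-R) 0 := by
    have := (IntervalIntegrable.iff_comp_neg (by simp)).mp h0R
    simp only [abs_neg, neg_zero] at this
    exact this.symm
  have hfull : IntervalIntegrable (fun t : ℝ => Real.log |t|) volume (-R) R :=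
    hneg.trans h0R
  apply hfull.mono_set
  have ha := abs_le.mp (le_max_left |a| |b|)
  have hb := abs_le.mp (le_max_right |a| |b|)
  rw [Set.uIcc_subset_uIcc_iff_le, min_eq_left (by linarith : (-R:ℝ) ≤ R),
    max_eq_right (by linarith : (-R:ℝ) ≤ R)]
  exact ⟨le_min ha.1 hb.1, max_le ha.2 hb.2⟩

lemma locallyIntegrable_log_abs : LocallyIntegrable (fun t : ℝ => Real.log |t|) volume := by
  rw [MeasureTheory.locallyIntegrable_iff]
  intro K hK
  obtain ⟨R0, hR0⟩ := (Metric.isBounded_iff_subset_closedBall 0).mp hK.isBounded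
  set R : ℝ := max R0 0 with hRdef
  have hRnn : 0 ≤ R := le_max_right _ _
  have hR : K ⊆ Metric.closedBall 0 R :=
    hR0.trans (Metric.closedBall_subset_closedBall (le_max_left _ _))
  have h : K ⊆ Set.Ioc (-R - 1) R := by
    intro x hx
    have := hR hx
    rw [Metric.mem_closedBall, Real.dist_eq, sub_zero, abs_le] at this
    exact ⟨by linarith [this.1], this.2⟩
  have hI := (intervalIntegrable_log_abs (-R - 1) R).def'
  rw [Set.uIoc_of_le (by linarith : -R - 1 ≤ R)] at hI
  exact hI.mono_set h

open scoped Convolution in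
lemma logPotential_eq_conv (g : ℝ → ℝ) (z : ℝ) :
    (∫ y : ℝ, Real.log |z - y| * g y)
      = ((fun t : ℝ => Real.log |t|) ⋆[ContinuousLinearMap.mul ℝ ℝ] g) z := by
  have h := MeasureTheory.integral_sub_left_eq_self
    (fun y : ℝ => Real.log |z - y| * g y) volume z
  rw [← h]
  simp only [convolution, ContinuousLinearMap.mul_apply']
  congr 1
  ext t
  rw [sub_sub_cancel]

open scoped Convolution in
/-- **Transferring the derivative under the logarithmic kernel (eq. (7), second part).**
For `f` continuously differentiable with compact support, the derivative of the logarithmic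
potential `L(x) = ∫_ℝ ln|x − y| f(y) dy` satisfies `L'(x) = ∫_ℝ ln|x − y| f'(y) dy`. -/
theorem deriv_logPotential_eq_logPotential_deriv
    (f : ℝ → ℝ) (hf : ContDiff ℝ 1 f) (hfc : HasCompactSupport f) :
    ∀ x : ℝ, deriv (fun x : ℝ => ∫ y : ℝ, Real.log |x - y| * f y) x
      = ∫ y : ℝ, Real.log |x - y| * deriv f y := by
  intro x
  have hL : (fun z : ℝ => ∫ y : ℝ, Real.log |z - y| * f y)
      = (fun t : ℝ => Real.log |t|) ⋆[ContinuousLinearMap.mul ℝ ℝ] f :=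
    funext fun z => logPotential_eq_conv f z
  have hd := HasCompactSupport.hasDerivAt_convolution_right
    (ContinuousLinearMap.mul ℝ ℝ) locallyIntegrable_log_abs hfc hf x
  rw [hL, hd.deriv]
  exact (logPotential_eq_conv (deriv f) x).symm
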